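/- Let Z be an exponential random variable with mean one, and let h : [0,∞) → R be a function such that the integrals below are well defined (e.g. h bounded and measurable). Define, for w > 0, f(w) = −(e^w / w)·∫_w^∞ (h(x) − E h(Z))·e^{−x} dx. Then f solves the differential equation w·f'(w) − (w − 1)·f(w) = h(w) − E h(Z) for all w > 0. -/

import Mathlib

open MeasureTheory Set

/-- The mean of `h` under the exponential distribution with mean one,
`E h(Z) = ∫₀^∞ h(x) e^{-x} dx`. -/
noncomputable def expMean (h : ℝ → ℝ) : ℝ := ∫ x in Set.Ioi (0 : ℝ), h x * Real.exp (-x)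

/-- The solution of the Stein equation for the exponential distribution:
`f(w) = -(e^w / w) · ∫_w^∞ (h(x) - E h(Z)) e^{-x} dx`. -/
noncomputable def steinSol (h : ℝ → ℝ) (w : ℝ) : ℝ :=
  -(Real.exp w / w) * ∫ x in Set.Ioi w, (h x - expMean h) * Real.exp (-x)

/-- the function `f = steinSol h` solves the Stein equation
`w f'(w) - (w - 1) f(w) = h(w) - E h(Z)` for all `w > 0`. -/
theorem steinSol_solves_steinEquation (h : ℝ → ℝ) (hcont : Continuous h)
    (hbdd : ∃ M : ℝ, ∀ x : ℝ, |h x| ≤ M) :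
    ∀ w : ℝ, 0 < w → ∃ f' : ℝ,
      HasDerivAt (steinSol h) f' w ∧
      w * f' - (w - 1) * steinSol h w = h w - expMean h := by
  obtain ⟨M, hM⟩ := hbdd
  set c := expMean h with hc
  set g : ℝ → ℝ := fun x => (h x - c) * Real.exp (-x) with hg
  have hgcont : Continuous g := (hcont.sub continuous_const).mul (Real.continuous_exp.comp continuous_neg)
  have hgint : ∀ a : ℝ, IntegrableOn g (Ioi a) := by
    intro a
    apply Integrable.mono' ((exp_neg_integrableOn_Ioi a one_pos).const_mul (|M| + |c|))
    · exact hgcont.aestronglyMeasurable.restrict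
    · filter_upwards with x
      have h1 : |h x - c| ≤ |M| + |c| := by
        calc |h x - c| ≤ |h x| + |c| := abs_sub _ _
        _ ≤ |M| + |c| := by have := hM x; have := le_abs_self M; linarith [abs_nonneg (h x)]
      have h2 : (0:ℝ) < Real.exp (-x) := Real.exp_pos _
      calc |g x| = |h x - c| * Real.exp (-x) := by
            rw [hg]; simp [abs_mul, abs_of_pos h2]
        _ ≤ (|M| + |c|) * Real.exp (-x) := by nlinarith
        _ = (|M| + |c|) * Real.exp (-1 * x) := by norm_num
  intro w hw
  set C := ∫ x in Ioi (0:ℝ), g x with hC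
  -- for u > 0, the tail integral equals C - ∫ 0..u
  have key : ∀ u : ℝ, 0 < u → (∫ x in Ioi u, g x) = C - ∫ t in (0:ℝ)..u, g t := by
    intro u hu
    have hsplit : C = (∫ x in Ioc (0:ℝ) u, g x) + ∫ x in Ioi u, g x := by
      rw [hC, ← setIntegral_union (Ioc_disjoint_Ioi le_rfl) measurableSet_Ioi
        (((hgint 0).mono_set Ioc_subset_Ioi_self)) (hgint u), Ioc_union_Ioi_eq_Ioi hu.le]
    rw [intervalIntegral.integral_of_le hu.le]
    linarith [hsplit]
  have hF : HasDerivAt (fun u => ∫ t in (0:ℝ)..u, g t) (g w) w :=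
    (hgcont.integral_hasStrictDerivAt 0 w).hasDerivAt
  have hdiv : HasDerivAt (fun u : ℝ => Real.exp u / u)
      ((Real.exp w * w - Real.exp w * 1) / w ^ 2) w :=
    (Real.hasDerivAt_exp w).div (hasDerivAt_id w) hw.ne'
  have hCF : HasDerivAt (fun u => C - ∫ t in (0:ℝ)..u, g t) (-g w) w := by
    exact ((hasDerivAt_const w C).sub hF).congr_deriv (zero_sub _)
  have hmul := hdiv.neg.mul hCF
  set f' := -((Real.exp w * w - Real.exp w * 1) / w ^ 2) * (C - ∫ t in (0:ℝ)..w, g t)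
    + -(Real.exp w / w) * -g w with hf'
  have heq : steinSol h =ᶠ[nhds w]
      (fun u : ℝ => -(Real.exp u / u) * (C - ∫ t in (0:ℝ)..u, g t)) := by
    filter_upwards [eventually_gt_nhds hw] with u hu
    rw [steinSol, ← key u hu]
  have hder : HasDerivAt (steinSol h) f' w := hmul.congr_of_eventuallyEq heq
  refine ⟨f', hder, ?_⟩
  have hsw : steinSol h w = -(Real.exp w / w) * (C - ∫ t in (0:ℝ)..w, g t) := by
    rw [steinSol, ← key w hw]
  rw [hsw, hf']
  have hexp : Real.exp w * Real.exp (-w) = 1 := by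
    rw [← Real.exp_add]; simp
  have hg' : g w = (h w - c) * Real.exp (-w) := rfl
  rw [hg', Real.exp_neg]
  field_simp
  ring
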